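/- Let K be a field, R = K[X_1, X_2, Y_1, Y_2, Y_3], and I = (X_1^3, X_2^3, X_1^2 Y_1 + X_1 X_2 Y_2 + X_2^2 Y_3). Then the maximal graded ideal m = (X_1, X_2, Y_1, Y_2, Y_3) is an associated prime of R/I, i.e., m = Ann_R(t) for some nonzero t ∈ R/I. -/

import Mathlib

open MvPolynomial

namespace ThreeCubicsAux

variable {K : Type*} [Field K]

noncomputable def m0 : Fin 5 →₀ ℕ := Finsupp.single 0 2 + Finsupp.single 1 2

lemma T_eq : (X 0 ^ 2 * X 1 ^ 2 : MvPolynomial (Fin 5) K) = monomial m0 1 := by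
  rw [X_pow_eq_monomial, X_pow_eq_monomial, monomial_mul, one_mul]; rfl

lemma coeff_m0_I {p : MvPolynomial (Fin 5) K}
    (hp : p ∈ Ideal.span {(X 0 ^ 3 : MvPolynomial (Fin 5) K), X 1 ^ 3,
      X 0 ^ 2 * X 2 + X 0 * X 1 * X 3 + X 1 ^ 2 * X 4}) :
    coeff m0 p = 0 := by
  rw [Ideal.mem_span_insert] at hp
  obtain ⟨a, z, hz, rfl⟩ := hp
  rw [Ideal.mem_span_insert] at hz
  obtain ⟨b, w, hw, rfl⟩ := hz
  rw [Ideal.mem_span_singleton'] at hw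
  obtain ⟨c, rfl⟩ := hw
  have h3 : (X 0 ^ 2 * X 2 + X 0 * X 1 * X 3 + X 1 ^ 2 * X 4 : MvPolynomial (Fin 5) K)
      = monomial (Finsupp.single 0 2 + Finsupp.single 2 1) 1
      + monomial (Finsupp.single 0 1 + Finsupp.single 1 1 + Finsupp.single 3 1) 1
      + monomial (Finsupp.single 1 2 + Finsupp.single 4 1) 1 := by
    have : ∀ i : Fin 5, (X i : MvPolynomial (Fin 5) K) = monomial (Finsupp.single i 1) 1 :=
      fun i => rfl
    rw [X_pow_eq_monomial, X_pow_eq_monomial, this 2, this 0, this 1, this 3, this 4]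
    simp [monomial_mul]
  rw [X_pow_eq_monomial, X_pow_eq_monomial, h3, mul_add, mul_add]
  simp only [coeff_add, coeff_mul_monomial']
  have hle : ∀ s t : Fin 5 →₀ ℕ, ¬ s ≤ t ↔ ∃ i, t i < s i := by
    intro s t
    rw [Finsupp.le_def]; push_neg; rfl
  rw [if_neg, if_neg, if_neg, if_neg, if_neg] <;>
    [skip; rw [hle]; rw [hle]; rw [hle]; rw [hle]; rw [hle]]
  · ring
  · exact ⟨4, by simp [m0, Finsupp.single_apply]⟩
  · exact ⟨3, by simp [m0, Finsupp.single_apply]⟩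
  · exact ⟨2, by simp [m0, Finsupp.single_apply]⟩
  · exact ⟨1, by simp [m0, Finsupp.single_apply]⟩
  · exact ⟨0, by simp [m0, Finsupp.single_apply]⟩

lemma span_range_X_eq_ker :
    (Ideal.span (Set.range X) : Ideal (MvPolynomial (Fin 5) K))
      = RingHom.ker (constantCoeff : MvPolynomial (Fin 5) K →+* K) := by
  ext p
  rw [← Set.image_univ, mem_ideal_span_X_image, RingHom.mem_ker]
  constructor
  · intro h
    by_contra hc
    obtain ⟨i, -, hi⟩ := h 0 (mem_support_iff.mpr hc)
    simp at hi
  · intro h m hm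
    have hm0 : m ≠ 0 := by
      rintro rfl
      exact mem_support_iff.mp hm h
    obtain ⟨i, hi⟩ := Finsupp.ne_iff.mp hm0
    exact ⟨i, Set.mem_univ i, hi⟩

end ThreeCubicsAux

open MvPolynomial in
open ThreeCubicsAux in
/-- In `R = K[X₁,X₂,Y₁,Y₂,Y₃]` with
`I = (X₁³, X₂³, X₁²Y₁ + X₁X₂Y₂ + X₂²Y₃)`, the maximal graded ideal
`m = (X₁,X₂,Y₁,Y₂,Y₃)` is an associated prime of `R/I`, i.e. `m = Ann_R(t)`
for some nonzero `t ∈ R/I`. -/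
theorem three_cubics_assoc_prime (K : Type*) [Field K] :
    let R := MvPolynomial (Fin 5) K
    let I : Ideal R := Ideal.span
      {X 0 ^ 3, X 1 ^ 3, X 0 ^ 2 * X 2 + X 0 * X 1 * X 3 + X 1 ^ 2 * X 4}
    IsAssociatedPrime (Ideal.span (Set.range X) : Ideal R) (R ⧸ I) := by
  intro R I
  set T : R := X 0 ^ 2 * X 1 ^ 2 with hT
  have g1mem : (X 0 ^ 3 : R) ∈ I := Ideal.subset_span (by simp)
  have g2mem : (X 1 ^ 3 : R) ∈ I := Ideal.subset_span (by simp)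
  have g3mem : (X 0 ^ 2 * X 2 + X 0 * X 1 * X 3 + X 1 ^ 2 * X 4 : R) ∈ I :=
    Ideal.subset_span (by simp)
  have hsmul : ∀ (r x : R), r • (Ideal.Quotient.mk I x) = Ideal.Quotient.mk I (r * x) :=
    fun r x => rfl
  rw [isAssociatedPrime_iff]
  constructor
  · rw [span_range_X_eq_ker]
    exact RingHom.ker_isPrime _
  · refine ⟨Ideal.Quotient.mk I T, le_antisymm ?_ ?_⟩
    · rw [Ideal.span_le]
      rintro _ ⟨i, rfl⟩
      rw [SetLike.mem_coe, Submodule.mem_colon_singleton, Submodule.mem_bot, hsmul,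
        Ideal.Quotient.eq_zero_iff_mem]
      fin_cases i
      · show X 0 * T ∈ I
        have h : X 0 * T = X 1 ^ 2 * (X 0 ^ 3) := by rw [hT]; ring
        rw [h]; exact Ideal.mul_mem_left _ _ g1mem
      · show X 1 * T ∈ I
        have h : X 1 * T = X 0 ^ 2 * (X 1 ^ 3) := by rw [hT]; ring
        rw [h]; exact Ideal.mul_mem_left _ _ g2mem
      · show X 2 * T ∈ I
        have h : X 2 * T = X 1 ^ 2 * (X 0 ^ 2 * X 2 + X 0 * X 1 * X 3 + X 1 ^ 2 * X 4)
            - (X 0 * X 3 + X 1 * X 4) * (X 1 ^ 3) := by rw [hT]; ring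
        rw [h]
        exact sub_mem (Ideal.mul_mem_left _ _ g3mem) (Ideal.mul_mem_left _ _ g2mem)
      · show X 3 * T ∈ I
        have h : X 3 * T = X 0 * X 1 * (X 0 ^ 2 * X 2 + X 0 * X 1 * X 3 + X 1 ^ 2 * X 4)
            - X 1 * X 2 * (X 0 ^ 3) - X 0 * X 4 * (X 1 ^ 3) := by rw [hT]; ring
        rw [h]
        exact sub_mem (sub_mem (Ideal.mul_mem_left _ _ g3mem) (Ideal.mul_mem_left _ _ g1mem))
          (Ideal.mul_mem_left _ _ g2mem)
      · show X 4 * T ∈ I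
        have h : X 4 * T = X 0 ^ 2 * (X 0 ^ 2 * X 2 + X 0 * X 1 * X 3 + X 1 ^ 2 * X 4)
            - (X 0 * X 2 + X 1 * X 3) * (X 0 ^ 3) := by rw [hT]; ring
        rw [h]
        exact sub_mem (Ideal.mul_mem_left _ _ g3mem) (Ideal.mul_mem_left _ _ g1mem)
    · intro r hr
      rw [Submodule.mem_colon_singleton, Submodule.mem_bot, hsmul,
        Ideal.Quotient.eq_zero_iff_mem] at hr
      have h0 : constantCoeff r = 0 := by
        have h := coeff_m0_I hr
        rw [hT, T_eq, coeff_mul_monomial', if_pos le_rfl, tsub_self, mul_one] at h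
        exact h
      rw [span_range_X_eq_ker]
      exact RingHom.mem_ker.mpr h0
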